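/- Quadratic dependence of the optimal value on the parameter within a critical region (MPQP): Let H be a real symmetric positive definite n×n matrix, A a real m×n matrix, E a real m×p matrix, b ∈ ℝᵐ. Let I ⊆ {1,…,m} be an index set, let Ã, Ẽ, b̃ denote the submatrices/subvector of A, E, b formed by the rows in I, and Ā, Ē, b̄ those formed by the rows in the complement of I; assume the rows of Ã are linearly independent. Suppose θ ∈ ℝᵖ satisfies (Ã H⁻¹ Ãᵀ)⁻¹ (b̃ + Ẽ θ) ≤ 0 and Ā H⁻¹ Ãᵀ (Ã H⁻¹ Ãᵀ)⁻¹ (b̃ + Ẽ θ) < b̄ + Ē θ. Then the minimum of (1/2) xᵀ H x over {x : A x ≤ b + E θ} equals (1/2) (b̃ + Ẽ θ)ᵀ (Ã H⁻¹ Ãᵀ)⁻¹ (b̃ + Ẽ θ); in particular, on the critical region the optimal value is a quadratic function of θ. -/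

import Mathlib

open Matrix

/-- Quadratic dependence of the optimal value on the parameter within a
critical region (MPQP).  The active index set is `I = Set.range σ`;
`At, Et, bt` are the rows of `A, E, b` in `I` (assumed linearly independent)
and `Ab, Eb, bb` the rows in its complement.  For `θ` in the critical region
`𝒫_p ∩ 𝒫_d`, the minimum of `(1/2)xᵀHx` over `{x : A x ≤ b + E θ}` is
attained and equals `(1/2)(b̃+Ẽθ)ᵀ(ÃH⁻¹Ãᵀ)⁻¹(b̃+Ẽθ)`. -/
theorem mpqp_value_quadratic_on_critical_region {m n p k : ℕ}
    (H : Matrix (Fin n) (Fin n) ℝ)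
    (hHsym : Hᵀ = H)
    (hHpd : ∀ v : Fin n → ℝ, v ≠ 0 → 0 < v ⬝ᵥ H.mulVec v)
    (A : Matrix (Fin m) (Fin n) ℝ) (E : Matrix (Fin m) (Fin p) ℝ) (b : Fin m → ℝ)
    (σ : Fin k → Fin m) (hσ : Function.Injective σ)
    (At : Matrix (Fin k) (Fin n) ℝ) (Et : Matrix (Fin k) (Fin p) ℝ) (bt : Fin k → ℝ)
    (Ab : Matrix {i : Fin m // i ∉ Set.range σ} (Fin n) ℝ)
    (Eb : Matrix {i : Fin m // i ∉ Set.range σ} (Fin p) ℝ)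
    (bb : {i : Fin m // i ∉ Set.range σ} → ℝ)
    (hAt : At = A.submatrix σ id) (hEt : Et = E.submatrix σ id) (hbt : bt = b ∘ σ)
    (hAb : Ab = A.submatrix Subtype.val id) (hEb : Eb = E.submatrix Subtype.val id)
    (hbb : bb = b ∘ Subtype.val)
    (hrows : LinearIndependent ℝ (fun i : Fin k => At i))
    (θ : Fin p → ℝ)
    (hPd : (At * H⁻¹ * Atᵀ)⁻¹.mulVec (bt + Et.mulVec θ) ≤ 0)
    (hPp : ∀ i : {i : Fin m // i ∉ Set.range σ},
      (Ab * H⁻¹ * Atᵀ * (At * H⁻¹ * Atᵀ)⁻¹).mulVec (bt + Et.mulVec θ) i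
        < (bb + Eb.mulVec θ) i) :
    IsLeast {v : ℝ | ∃ x : Fin n → ℝ, A.mulVec x ≤ b + E.mulVec θ ∧
        v = (1/2) * (x ⬝ᵥ H.mulVec x)}
      ((1/2) * ((bt + Et.mulVec θ) ⬝ᵥ
        (At * H⁻¹ * Atᵀ)⁻¹.mulVec (bt + Et.mulVec θ))) := by
  classical
  have hH : H.PosDef := by
    refine Matrix.PosDef.of_dotProduct_mulVec_pos ?_ ?_
    · rw [Matrix.IsHermitian, Matrix.conjTranspose_eq_transpose_of_trivial, hHsym]
    · intro x hx
      simpa using hHpd x hx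
  have hHinv : H⁻¹.PosDef := hH.inv
  have hHinvSym : (H⁻¹)ᵀ = H⁻¹ := by
    rw [Matrix.transpose_nonsing_inv, hHsym]
  set w : Fin k → ℝ := bt + Et.mulVec θ with hw
  set M : Matrix (Fin k) (Fin k) ℝ := At * H⁻¹ * Atᵀ with hM
  -- Atᵀ *ᵥ v ≠ 0 when v ≠ 0
  have hAtT : ∀ v : Fin k → ℝ, v ≠ 0 → Atᵀ.mulVec v ≠ 0 := by
    intro v hv hvz
    apply hv
    have h0 : ∑ i, v i • At i = 0 := by
      funext j
      have := congrFun hvz j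
      simpa [Matrix.mulVec_transpose, Matrix.vecMul, dotProduct,
        Finset.sum_apply] using this
    funext i
    exact Fintype.linearIndependent_iff.mp hrows v h0 i
  have hMpd : M.PosDef := by
    refine Matrix.PosDef.of_dotProduct_mulVec_pos ?_ ?_
    · rw [Matrix.IsHermitian, Matrix.conjTranspose_eq_transpose_of_trivial, hM,
        Matrix.transpose_mul, Matrix.transpose_mul, Matrix.transpose_transpose,
        hHinvSym, Matrix.mul_assoc]
    · intro v hv
      have h1 : M.mulVec v = At.mulVec (H⁻¹.mulVec (Atᵀ.mulVec v)) := by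
        rw [hM, ← Matrix.mulVec_mulVec, ← Matrix.mulVec_mulVec]
      have h2 : v ⬝ᵥ M.mulVec v = (Atᵀ.mulVec v) ⬝ᵥ H⁻¹.mulVec (Atᵀ.mulVec v) := by
        rw [h1, Matrix.dotProduct_mulVec, ← Matrix.mulVec_transpose]
      have := hHinv.dotProduct_mulVec_pos (hAtT v hv)
      simpa [h2] using this
  have hMdet : IsUnit M.det := (Matrix.isUnit_iff_isUnit_det M).mp hMpd.isUnit
  have hMM : M * M⁻¹ = 1 := Matrix.mul_nonsing_inv M hMdet
  have hHdet : IsUnit H.det := (Matrix.isUnit_iff_isUnit_det H).mp hH.isUnit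
  have hHH : H * H⁻¹ = 1 := Matrix.mul_nonsing_inv H hHdet
  set lam : Fin k → ℝ := M⁻¹.mulVec w with hlam
  set xs : Fin n → ℝ := H⁻¹.mulVec (Atᵀ.mulVec lam) with hxs
  have hHxs : H.mulVec xs = Atᵀ.mulVec lam := by
    rw [hxs, Matrix.mulVec_mulVec, hHH, Matrix.one_mulVec]
  have hAtxs : At.mulVec xs = w := by
    rw [hxs, hlam]
    simp only [Matrix.mulVec_mulVec, ← Matrix.mul_assoc]
    rw [← hM, hMM, Matrix.one_mulVec]
  -- value of xs
  have hval : xs ⬝ᵥ H.mulVec xs = w ⬝ᵥ lam := by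
    rw [hHxs, Matrix.dotProduct_mulVec, Matrix.vecMul_transpose, hAtxs]
  -- row identities
  have hrowA : ∀ (x : Fin n → ℝ) (j : Fin k), At.mulVec x j = A.mulVec x (σ j) := by
    intro x j; rw [hAt]; rfl
  have hrowAb : ∀ (x : Fin n → ℝ) (i : {i : Fin m // i ∉ Set.range σ}),
      Ab.mulVec x i = A.mulVec x i.1 := by
    intro x i; rw [hAb]; rfl
  have hwj : ∀ j : Fin k, w j = b (σ j) + E.mulVec θ (σ j) := by
    intro j
    rw [hw, hbt, hEt]
    show b (σ j) + (E.submatrix σ id).mulVec θ j = _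
    rfl
  -- feasibility of xs
  have hfeas : A.mulVec xs ≤ b + E.mulVec θ := by
    intro i
    by_cases hi : i ∈ Set.range σ
    · obtain ⟨j, rfl⟩ := hi
      have : At.mulVec xs j = w j := congrFun hAtxs j
      rw [hrowA, hwj] at this
      simp [this]
    · have h := hPp ⟨i, hi⟩
      have hL : (Ab * H⁻¹ * Atᵀ * M⁻¹).mulVec w ⟨i, hi⟩ = A.mulVec xs i := by
        rw [← hrowAb xs ⟨i, hi⟩, hxs, hlam]
        simp only [Matrix.mulVec_mulVec, ← Matrix.mul_assoc]
      have hR : (bb + Eb.mulVec θ) ⟨i, hi⟩ = b i + E.mulVec θ i := by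
        rw [hbb, hEb]
        show b i + (E.submatrix Subtype.val id).mulVec θ ⟨i, hi⟩ = _
        rfl
      rw [hL, hR] at h
      exact le_of_lt h
  constructor
  · exact ⟨xs, hfeas, by rw [hval]⟩
  · rintro v ⟨x, hx, rfl⟩
    set d : Fin n → ℝ := x - xs with hd
    have hdd : 0 ≤ d ⬝ᵥ H.mulVec d := by
      have := hH.posSemidef.dotProduct_mulVec_nonneg d
      simpa using this
    have hcross : 0 ≤ d ⬝ᵥ H.mulVec xs := by
      rw [hHxs, Matrix.dotProduct_mulVec, Matrix.vecMul_transpose]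
      rw [dotProduct]
      apply Finset.sum_nonneg
      intro j _
      have hlj : lam j ≤ 0 := hPd j
      have hAd : At.mulVec d j ≤ 0 := by
        have h1 : At.mulVec d j = At.mulVec x j - At.mulVec xs j := by
          rw [hd, Matrix.mulVec_sub]; rfl
        have h2 : At.mulVec x j ≤ w j := by
          rw [hrowA, hwj]
          exact hx (σ j)
        rw [h1, hAtxs]
        linarith
      nlinarith [mul_nonneg (neg_nonneg.mpr hAd) (neg_nonneg.mpr hlj)]
    have hsym : xs ⬝ᵥ H.mulVec d = d ⬝ᵥ H.mulVec xs := by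
      rw [Matrix.dotProduct_mulVec, ← Matrix.mulVec_transpose, hHsym, dotProduct_comm]
    have hexp : x ⬝ᵥ H.mulVec x
        = xs ⬝ᵥ H.mulVec xs + 2 * (d ⬝ᵥ H.mulVec xs) + d ⬝ᵥ H.mulVec d := by
      have hxd : x = xs + d := by rw [hd]; abel
      rw [hxd, Matrix.mulVec_add, add_dotProduct, dotProduct_add,
        dotProduct_add, hsym]
      ring
    have hkey : w ⬝ᵥ lam ≤ x ⬝ᵥ H.mulVec x := by
      rw [hexp, hval]
      linarith
    linarith
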